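/- Let l ≥ 1 be an integer and let z, w ∈ ℂ with |z|² + |w|² = 1. The polynomial (zζ+wω)^l·(−conj(w)ζ+conj(z)ω)^l is a complex scalar multiple of (ζω)^l if and only if zw = 0, i.e. if and only if the matrix {z,w} ∈ SU(2) is diagonal or antidiagonal (an element of the normalizer of the diagonal torus). -/

import Mathlib

/-- For `l ≥ 1` and `{z,w} ∈ SU(2)`, the polynomial
`(zζ+wω)^l (−conj(w)ζ+conj(z)ω)^l` is a scalar multiple of `(ζω)^l` iff `zw = 0`, i.e. iff the
matrix `{z,w}` is diagonal or antidiagonal (lies in the normalizer of the diagonal torus). -/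
theorem stmt4 (l : ℕ) (hl : 1 ≤ l) (z w : ℂ)
    (hzw : ‖z‖ ^ 2 + ‖w‖ ^ 2 = 1) :
    (∃ c : ℂ, ∀ ζ ω : ℂ,
        (z * ζ + w * ω) ^ l * (-(starRingEnd ℂ w) * ζ + (starRingEnd ℂ z) * ω) ^ l =
          c * (ζ * ω) ^ l) ↔ z * w = 0 := by
  have hl0 : l ≠ 0 := by omega
  constructor
  · rintro ⟨c, hc⟩
    have h := hc 1 0
    simp [zero_pow hl0] at h
    rcases h with h | h
    · simp [h.1]
    · simp [h.1]
  · intro h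
    rcases mul_eq_zero.mp h with hz | hw
    · refine ⟨(-(w * starRingEnd ℂ w)) ^ l, fun ζ ω => ?_⟩
      subst hz
      rw [← mul_pow]
      rw [← mul_pow]
      simp only [map_zero]
      ring_nf
    · refine ⟨(z * starRingEnd ℂ z) ^ l, fun ζ ω => ?_⟩
      subst hw
      rw [← mul_pow]
      rw [← mul_pow]
      simp only [map_zero]
      ring_nf
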